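/- Let F be a closure system on a finite set G, and let R ⊆ F be a closure system. Then R is meet-irreducible in the lattice of closure systems contained in F if and only if there exist A ∈ F and i ∈ G such that A is covered in (F, ⊆) by the F-closure of A ∪ {i}, and R = F_{A,{i}} ∩ F. -/

import Mathlib

variable {α : Type*}

/-- A closure system on (the universe of) `α`: contains the full set and is
closed under (nonempty) intersections. -/
def IsClosureSystem (F : Set (Set α)) : Prop :=
  Set.univ ∈ F ∧ ∀ S ⊆ F, S.Nonempty → ⋂₀ S ∈ F

/-- `R` is a closure system contained in `F` (an element of the ideal `↓F`). -/
def DownF (F R : Set (Set α)) : Prop := IsClosureSystem R ∧ R ⊆ F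

/-- Models of the implication `A → B`. -/
def FAB (A B : Set α) : Set (Set α) := {D | ¬ A ⊆ D ∨ B ⊆ D}

/-- Closure operator of a closure system `R`. -/
def clOp (R : Set (Set α)) (X : Set α) : Set α := ⋂₀ {D | D ∈ R ∧ X ⊆ D}

/-- The closure system contained in `F` generated by the family `X`. -/
def genCS (F X : Set (Set α)) : Set (Set α) :=
  ⋂₀ {T | IsClosureSystem T ∧ T ⊆ F ∧ X ⊆ T}

/-- `R'` is covered by `R` in the lattice `↓F` of closure systems contained in `F`. -/
def CoversIn (F R' R : Set (Set α)) : Prop :=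
  DownF F R' ∧ DownF F R ∧ R' ⊂ R ∧ ¬ ∃ T, DownF F T ∧ R' ⊂ T ∧ T ⊂ R

/-- `A` is covered by `B` in the lattice `(F, ⊆)`. -/
def CoversF (F : Set (Set α)) (A B : Set α) : Prop :=
  A ∈ F ∧ B ∈ F ∧ A ⊂ B ∧ ¬ ∃ C ∈ F, A ⊂ C ∧ C ⊂ B

/-- `A` is meet-irreducible in the lattice `(R, ⊆)` of a closure system `R`. -/
def MeetIrredSet (R : Set (Set α)) (A : Set α) : Prop :=
  A ∈ R ∧ A ≠ Set.univ ∧ ¬ ∃ B ∈ R, ∃ C ∈ R, A ⊂ B ∧ A ⊂ C ∧ A = B ∩ C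

/-- `R` is meet-irreducible in the lattice `↓F`. -/
def MeetIrredDown (F R : Set (Set α)) : Prop :=
  DownF F R ∧ R ≠ F ∧ ¬ ∃ T, DownF F T ∧ ∃ U, DownF F U ∧ R ⊂ T ∧ R ⊂ U ∧ R = T ∩ U

/-- `R` is join-irreducible in the lattice `↓F` (bottom is `{univ}`,
join of a family is the generated closure system). -/
def JoinIrredDown (F R : Set (Set α)) : Prop :=
  DownF F R ∧ R ≠ {Set.univ} ∧
    ∀ Y : Set (Set (Set α)), Y.Finite → (∀ T ∈ Y, DownF F T) →
      R = genCS F (⋃₀ Y) → R ∈ Y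

section Aux
variable {α : Type*}

lemma clOp_mem {F : Set (Set α)} (hF : IsClosureSystem F) (X : Set α) : clOp F X ∈ F := by
  apply hF.2
  · intro D hD; exact hD.1
  · exact ⟨Set.univ, hF.1, Set.subset_univ X⟩

lemma subset_clOp (F : Set (Set α)) (X : Set α) : X ⊆ clOp F X := by
  intro x hx D hD; exact hD.2 hx

lemma clOp_subset {F : Set (Set α)} {X D : Set α} (hD : D ∈ F) (hXD : X ⊆ D) :
    clOp F X ⊆ D := Set.sInter_subset_of_mem ⟨hD, hXD⟩

lemma inter_mem_cs {F : Set (Set α)} (hF : IsClosureSystem F) {D E : Set α}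
    (hD : D ∈ F) (hE : E ∈ F) : D ∩ E ∈ F := by
  have := hF.2 {D, E} (by intro X hX; rcases hX with h | h <;> simp_all) ⟨D, by simp⟩
  rwa [Set.sInter_pair] at this

lemma downF_inter {F T U : Set (Set α)} (hT : DownF F T) (hU : DownF F U) :
    DownF F (T ∩ U) := by
  refine ⟨⟨⟨hT.1.1, hU.1.1⟩, ?_⟩, fun D hD => hT.2 hD.1⟩
  intro S hS hSne
  exact ⟨hT.1.2 S (fun D hD => (hS hD).1) hSne, hU.1.2 S (fun D hD => (hS hD).2) hSne⟩

/-- The closure system generated by `R ∪ {D}`. -/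
def extCS (R : Set (Set α)) (D : Set α) : Set (Set α) :=
  R ∪ {X | ∃ E ∈ R, X = D ∩ E}

lemma subset_extCS (R : Set (Set α)) (D : Set α) : R ⊆ extCS R D := Set.subset_union_left

lemma mem_extCS {R : Set (Set α)} (hR : IsClosureSystem R) (D : Set α) : D ∈ extCS R D :=
  Or.inr ⟨Set.univ, hR.1, by simp⟩

lemma extCS_cs {R : Set (Set α)} (hR : IsClosureSystem R) (D : Set α) :
    IsClosureSystem (extCS R D) := by
  refine ⟨Or.inl hR.1, ?_⟩
  intro S hS hSne
  by_cases hsub : S ⊆ R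
  · exact Or.inl (hR.2 S hsub hSne)
  · rw [Set.not_subset] at hsub
    obtain ⟨X, hXS, hXR⟩ := hsub
    obtain ⟨E₀, hE₀R, hXeq⟩ : ∃ E ∈ R, X = D ∩ E := by
      rcases hS hXS with h | h
      · exact absurd h hXR
      · exact h
    set 𝓔 : Set (Set α) := (S ∩ R) ∪ {E | E ∈ R ∧ D ∩ E ∈ S} with h𝓔
    have h𝓔R : 𝓔 ⊆ R := by
      intro E hE; rcases hE with h | h
      · exact h.2
      · exact h.1
    have h𝓔ne : 𝓔.Nonempty := ⟨E₀, Or.inr ⟨hE₀R, hXeq ▸ hXS⟩⟩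
    have key : ⋂₀ S = D ∩ ⋂₀ 𝓔 := by
      apply Set.Subset.antisymm
      · intro x hx
        refine ⟨by have := hx X hXS; rw [hXeq] at this; exact this.1, ?_⟩
        intro E hE
        rcases hE with h | h
        · exact hx E h.1
        · exact (hx (D ∩ E) h.2).2
      · intro x hx
        intro Y hYS
        rcases hS hYS with h | h
        · exact hx.2 Y (Or.inl ⟨hYS, h⟩)
        · obtain ⟨E, hER, rfl⟩ := h
          exact ⟨hx.1, hx.2 E (Or.inr ⟨hER, hYS⟩)⟩
    exact Or.inr ⟨⋂₀ 𝓔, hR.2 𝓔 h𝓔R h𝓔ne, key⟩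

lemma extCS_downF {F R : Set (Set α)} (hF : IsClosureSystem F) (hR : DownF F R)
    {D : Set α} (hD : D ∈ F) : DownF F (extCS R D) := by
  refine ⟨extCS_cs hR.1 D, ?_⟩
  intro X hX
  rcases hX with h | h
  · exact hR.2 h
  · obtain ⟨E, hER, rfl⟩ := h
    exact inter_mem_cs hF hD (hR.2 hER)

end Aux

/-- characterization of meet-irreducible elements of ↓F. -/
theorem stmt_7 {α : Type*} [Fintype α] (F R : Set (Set α))
    (hF : IsClosureSystem F) (hR : DownF F R) :
    MeetIrredDown F R ↔
      ∃ A ∈ F, ∃ i : α, CoversF F A (clOp F (A ∪ {i})) ∧ R = FAB A {i} ∩ F := by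
  constructor
  · rintro ⟨-, hRneF, hIrr⟩
    -- the set of strict extensions of R in ↓F
    set 𝒮 : Set (Set (Set α)) := {T | DownF F T ∧ R ⊂ T} with h𝒮
    have hF𝒮 : F ∈ 𝒮 := ⟨⟨hF, subset_rfl⟩, ssubset_of_subset_of_ne hR.2 hRneF⟩
    -- a minimal strict extension
    obtain ⟨T₀, hT₀𝒮, hT₀min⟩ : ∃ T₀ ∈ 𝒮, ∀ T ∈ 𝒮, T ⊆ T₀ → T = T₀ := by
      obtain ⟨a, ha, hmin⟩ := (Set.toFinite 𝒮).exists_minimal ⟨F, hF𝒮⟩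
      exact ⟨a, ha, fun b hb hba => le_antisymm hba (hmin hb hba)⟩
    -- T₀ is the least strict extension
    have hT₀least : ∀ T ∈ 𝒮, T₀ ⊆ T := by
      intro T hT
      have hDI : DownF F (T₀ ∩ T) := downF_inter hT₀𝒮.1 hT.1
      have hRsub : R ⊆ T₀ ∩ T := Set.subset_inter hT₀𝒮.2.1 hT.2.1
      rcases eq_or_ne R (T₀ ∩ T) with heq | hne
      · exact absurd ⟨T₀, hT₀𝒮.1, T, hT.1, hT₀𝒮.2, hT.2, heq⟩ hIrr
      · have : T₀ ∩ T ∈ 𝒮 := ⟨hDI, ssubset_of_subset_of_ne hRsub hne⟩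
        have h2 := hT₀min _ this Set.inter_subset_left
        rw [← h2]
        exact Set.inter_subset_right
    obtain ⟨A, hAT₀, hAnR⟩ : ∃ A ∈ T₀, A ∉ R := Set.exists_of_ssubset hT₀𝒮.2
    have hAF : A ∈ F := hT₀𝒮.1.2 hAT₀
    -- key decomposition fact
    have fact : ∀ D ∈ F, D ∉ R → ∃ E ∈ R, A = D ∩ E := by
      intro D hDF hDnR
      have hT𝒮 : extCS R D ∈ 𝒮 := by
        refine ⟨extCS_downF hF hR hDF, ssubset_of_subset_of_ne (subset_extCS R D) ?_⟩
        intro h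
        exact hDnR (h ▸ mem_extCS hR.1 D)
      have hAext : A ∈ extCS R D := hT₀least _ hT𝒮 hAT₀
      rcases hAext with h | h
      · exact absurd h hAnR
      · exact h
    have hAmin : ∀ D ∈ F, D ∉ R → A ⊆ D := by
      intro D hDF hDnR
      obtain ⟨E, -, hAeq⟩ := fact D hDF hDnR
      rw [hAeq]; exact Set.inter_subset_left
    -- B = closure of A in R, i ∈ B \ A
    set B : Set α := clOp R A with hB
    have hBR : B ∈ R := clOp_mem hR.1 A
    have hAB : A ⊆ B := subset_clOp R A
    have hBsub : ∀ E ∈ R, A ⊆ E → B ⊆ E := fun E hE hAE => clOp_subset hE hAE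
    obtain ⟨i, hiB, hiA⟩ : ∃ i, i ∈ B ∧ i ∉ A := by
      have : A ≠ B := fun h => hAnR (h ▸ hBR)
      exact Set.exists_of_ssubset (ssubset_of_subset_of_ne hAB this)
    -- characterization of membership in R
    have char : ∀ E ∈ F, (E ∈ R ↔ ¬ A ⊆ E ∨ i ∈ E) := by
      intro E hEF
      constructor
      · intro hER
        by_cases h : A ⊆ E
        · exact Or.inr (hBsub E hER h hiB)
        · exact Or.inl h
      · intro hcond
        by_contra hEnR
        obtain ⟨E', hE'R, hAeq⟩ := fact E hEF hEnR
        have hAE : A ⊆ E := hAeq ▸ Set.inter_subset_left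
        have hiE : i ∈ E := hcond.resolve_left (not_not_intro hAE)
        have hiE' : i ∈ E' := hBsub E' hE'R (hAeq ▸ Set.inter_subset_right) hiB
        exact hiA (hAeq ▸ ⟨hiE, hiE'⟩)
    refine ⟨A, hAF, i, ?_, ?_⟩
    · -- covering
      set C : Set α := clOp F (A ∪ {i}) with hC
      have hCF : C ∈ F := clOp_mem hF _
      have hsubC : A ∪ {i} ⊆ C := subset_clOp F _
      have hiC : i ∈ C := hsubC (Or.inr rfl)
      have hAC : A ⊆ C := fun x hx => hsubC (Or.inl hx)
      have hCB : C ⊆ B := clOp_subset (hR.2 hBR) (Set.union_subset hAB (by simpa using hiB))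
      refine ⟨hAF, hCF, ⟨hAC, fun h => hiA (h hiC)⟩, ?_⟩
      rintro ⟨E, hEF, hAE, hEC⟩
      have hiE : i ∉ E := by
        intro hiE
        exact hEC.2 (clOp_subset hEF (Set.union_subset hAE.1 (by simpa using hiE)))
      have hEnR : E ∉ R := by
        intro hER
        rcases (char E hEF).1 hER with h | h
        · exact h hAE.1
        · exact hiE h
      obtain ⟨E', hE'R, hAeq⟩ := fact E hEF hEnR
      have hBE' : B ⊆ E' := hBsub E' hE'R (hAeq ▸ Set.inter_subset_right) 
      have : E ⊆ E' := fun x hx => hBE' (hCB (hEC.1 hx))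
      exact hAE.2 (fun x hx => hAeq ▸ ⟨hx, this hx⟩)
    · -- R = FAB A {i} ∩ F
      ext E
      simp only [FAB, Set.mem_inter_iff, Set.mem_setOf_eq, Set.singleton_subset_iff]
      constructor
      · intro hER
        exact ⟨(char E (hR.2 hER)).1 hER, hR.2 hER⟩
      · rintro ⟨h, hEF⟩
        exact (char E hEF).2 h
  · rintro ⟨A, hAF, i, hcov, rfl⟩
    set C : Set α := clOp F (A ∪ {i}) with hC
    have hsubC : A ∪ {i} ⊆ C := subset_clOp F _
    have hiC : i ∈ C := hsubC (Or.inr rfl)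
    have hiA : i ∉ A := by
      intro h
      exact hcov.2.2.1.2 (clOp_subset hAF (Set.union_subset subset_rfl (by simpa using h)))
    have hAnR : A ∉ FAB A {i} ∩ F := by
      rintro ⟨h, -⟩
      rcases h with h | h
      · exact h subset_rfl
      · exact hiA (h rfl)
    have hCR : C ∈ FAB A {i} ∩ F := ⟨Or.inr (by simpa using hiC), clOp_mem hF _⟩
    -- key: any strict extension of R in ↓F contains A
    have key : ∀ T, DownF F T → FAB A {i} ∩ F ⊂ T → A ∈ T := by
      intro T hT hRT
      obtain ⟨D, hDT, hDnR⟩ := Set.exists_of_ssubset hRT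
      have hDF : D ∈ F := hT.2 hDT
      have hAD : A ⊆ D := by
        by_contra h
        exact hDnR ⟨Or.inl h, hDF⟩
      have hiD : i ∉ D := by
        intro h
        exact hDnR ⟨Or.inr (by simpa using h), hDF⟩
      have hCT : C ∈ T := hRT.1 hCR
      have hDC : D ∩ C ∈ T := inter_mem_cs hT.1 hDT hCT
      have hADC : A ⊆ D ∩ C := Set.subset_inter hAD (fun x hx => hsubC (Or.inl hx))
      have hssub : D ∩ C ⊂ C := ⟨Set.inter_subset_right, fun h => hiD (h hiC).1⟩
      have : ¬ A ⊂ D ∩ C := fun h => hcov.2.2.2 ⟨D ∩ C, hT.2 hDC, h, hssub⟩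
      have hAeq : A = D ∩ C := Set.Subset.antisymm hADC (by
        by_contra h
        exact this ⟨hADC, fun h' => h h'⟩)
      exact hAeq ▸ hDC
    refine ⟨hR, ?_, ?_⟩
    · intro h
      exact hAnR (by rw [h]; exact hAF)
    · rintro ⟨T, hT, U, hU, hRT, hRU, hRTU⟩
      exact hAnR (hRTU ▸ ⟨key T hT hRT, key U hU hRU⟩)
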